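/- Let h : ℝ³ → ℂ be continuous, L > 0, and let χ_I : ℝ³ → ℂ be measurable with ∫_{ℝ³} (1 + ‖x‖)·|χ_I(x)| dx < ∞. Then lim_{V→∞} ∫_{ℝ³} |χ_I(x)|·‖(h_x)_L − (h_x)_{L,V}‖₂ dx = 0. -/

import Mathlib

open MeasureTheory
open scoped RealInnerProductSpace

/-- The nearest lattice point `q_V(k)` of the momentum lattice `Γ_V`, defined
componentwise by `q_V(k)_j = (2π/V)·⌊V·k_j/(2π) + 1/2⌋`. -/
noncomputable def qV (V : ℝ) (k : EuclideanSpace ℝ (Fin 3)) :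
    EuclideanSpace ℝ (Fin 3) :=
  WithLp.toLp 2 fun j => (2 * Real.pi / V) * (⌊V * k j / (2 * Real.pi) + 1 / 2⌋ : ℤ)

/-- The cube `I_L = [−L,L]³ ⊂ ℝ³`. -/
def cubeI (L : ℝ) : Set (EuclideanSpace ℝ (Fin 3)) :=
  {k | ∀ j, k j ∈ Set.Icc (-L) L}

lemma euclid_norm_le {y : EuclideanSpace ℝ (Fin 3)} {c : ℝ} (hc : 0 ≤ c)
    (hb : ∀ j, |y j| ≤ c) : ‖y‖ ≤ 2 * c := by
  rw [EuclideanSpace.norm_eq]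
  have h1 : ∀ j : Fin 3, ‖y j‖ ^ 2 ≤ c ^ 2 := fun j => by
    rw [Real.norm_eq_abs]
    exact pow_le_pow_left₀ (abs_nonneg _) (hb j) 2
  calc Real.sqrt (∑ j, ‖y j‖ ^ 2) ≤ Real.sqrt (∑ _j : Fin 3, c ^ 2) :=
        Real.sqrt_le_sqrt (Finset.sum_le_sum fun j _ => h1 j)
    _ ≤ Real.sqrt ((2 * c) ^ 2) := Real.sqrt_le_sqrt (by
        simp only [Finset.sum_const, Finset.card_univ, Fintype.card_fin, nsmul_eq_mul]
        push_cast
        nlinarith)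
    _ = 2 * c := Real.sqrt_sq (by positivity)

lemma dist_qV {V : ℝ} (hV : 0 < V) (k : EuclideanSpace ℝ (Fin 3)) :
    dist (qV V k) k ≤ 8 / V := by
  rw [dist_eq_norm]
  have hcomp : ∀ j, |(qV V k - k) j| ≤ 4 / V := by
    intro j
    have hπ := Real.pi_pos
    set t : ℝ := V * k j / (2 * Real.pi) with ht
    have hkj : k j = (2 * Real.pi / V) * t := by
      rw [ht]
      field_simp
    have hsub : (qV V k - k) j = (2 * Real.pi / V) * ((⌊t + 1/2⌋ : ℝ) - t) := by
      have : (qV V k - k) j = qV V k j - k j := rfl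
      rw [this, hkj]
      simp only [qV, PiLp.toLp_apply]
      ring
    have hfl : |(⌊t + 1/2⌋ : ℝ) - t| ≤ 1/2 := by
      have h1 : (⌊t + 1/2⌋ : ℝ) ≤ t + 1/2 := Int.floor_le _
      have h2 : t + 1/2 - 1 < (⌊t + 1/2⌋ : ℝ) := Int.sub_one_lt_floor _
      rw [abs_le]; constructor <;> linarith
    rw [hsub, abs_mul]
    have hx : |2 * Real.pi / V| = 2 * Real.pi / V := abs_of_pos (by positivity)
    rw [hx]
    have hπ4 : Real.pi ≤ 4 := Real.pi_le_four
    calc 2 * Real.pi / V * |(⌊t + 1/2⌋ : ℝ) - t| ≤ 2 * Real.pi / V * (1/2) := by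
          apply mul_le_mul_of_nonneg_left hfl (by positivity)
      _ = Real.pi / V := by ring
      _ ≤ 4 / V := by gcongr
  calc ‖qV V k - k‖ ≤ 2 * (4 / V) := euclid_norm_le (by positivity) hcomp
    _ = 8 / V := by ring

lemma abs_exp_I_real (a : ℝ) : ‖Complex.exp (Complex.I * a)‖ = 1 := by
  rw [Complex.norm_exp]
  simp

lemma exp_I_sub_le (a b : ℝ) :
    ‖Complex.exp (Complex.I * a) - Complex.exp (Complex.I * b)‖ ≤ 2 * |a - b| := by
  have h1 : Complex.exp (Complex.I * b) * Complex.exp (Complex.I * ((a - b : ℝ) : ℂ))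
      = Complex.exp (Complex.I * a) := by
    rw [← Complex.exp_add]
    congr 1
    push_cast
    ring
  have h2 : Complex.exp (Complex.I * a) - Complex.exp (Complex.I * b)
      = Complex.exp (Complex.I * b) * (Complex.exp (Complex.I * ((a - b : ℝ) : ℂ)) - 1) := by
    rw [mul_sub, h1, mul_one]
  rw [h2, norm_mul, abs_exp_I_real, one_mul]
  have habsI : ‖Complex.I * ((a - b : ℝ) : ℂ)‖ = |a - b| := by
    rw [norm_mul, Complex.norm_I, one_mul, Complex.norm_real, Real.norm_eq_abs]
  by_cases hab : |a - b| ≤ 1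
  · have := Complex.norm_exp_sub_one_le (x := Complex.I * ((a - b : ℝ) : ℂ)) (by rw [habsI]; exact hab)
    rwa [habsI] at this
  · push_neg at hab
    calc ‖Complex.exp (Complex.I * ((a - b : ℝ) : ℂ)) - 1‖
        ≤ ‖Complex.exp (Complex.I * ((a - b : ℝ) : ℂ)) - 0‖ + ‖(0 : ℂ) - 1‖ :=
          norm_sub_le_norm_sub_add_norm_sub _ 0 _
      _ ≤ 2 := by
          rw [sub_zero, zero_sub]
          have h3 : ‖Complex.exp (Complex.I * ((a - b : ℝ) : ℂ))‖ = 1 := abs_exp_I_real _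
          have h4 : ‖(-1 : ℂ)‖ = 1 := by simp
          rw [h3, h4]; norm_num
      _ ≤ 2 * |a - b| := by nlinarith

lemma cube_measurable (L : ℝ) : MeasurableSet (cubeI L) := by
  have : cubeI L = ⋂ j, (fun k : EuclideanSpace ℝ (Fin 3) => k j) ⁻¹' Set.Icc (-L) L := by
    ext k; simp [cubeI]
  rw [this]
  exact MeasurableSet.iInter fun j =>
    ((EuclideanSpace.proj j (𝕜 := ℝ)).continuous.measurable) measurableSet_Icc

lemma cube_compact {L : ℝ} (hL : 0 < L) : IsCompact (cubeI L) := by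
  refine (isCompact_closedBall (0 : EuclideanSpace ℝ (Fin 3)) (2 * L)).of_isClosed_subset ?_ ?_
  · have : cubeI L = ⋂ j, (fun k : EuclideanSpace ℝ (Fin 3) => k j) ⁻¹' Set.Icc (-L) L := by
      ext k; simp [cubeI]
    rw [this]
    exact isClosed_iInter fun j =>
      IsClosed.preimage (EuclideanSpace.proj j (𝕜 := ℝ)).continuous isClosed_Icc
  · intro k hk
    simp only [Metric.mem_closedBall, dist_zero_right]
    exact euclid_norm_le hL.le fun j => abs_le.mpr ⟨(hk j).1, (hk j).2⟩

lemma twoEps_lt {ε w a : ℝ} (hε : 0 < ε) (hw : 0 ≤ w) (ha : 0 ≤ a) :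
    2 * (ε / (2 * w * a + 1)) * w * a < ε := by
  have h1 : (0:ℝ) < 2 * w * a + 1 := by positivity
  have h2 : 2 * (ε / (2 * w * a + 1)) * w * a = ε * ((2 * w * a) / (2 * w * a + 1)) := by
    field_simp
  rw [h2]
  have h3 : (2 * w * a) / (2 * w * a + 1) < 1 := by
    rw [div_lt_one h1]; linarith
  calc ε * ((2 * w * a) / (2 * w * a + 1)) < ε * 1 := mul_lt_mul_of_pos_left h3 hε
    _ = ε := mul_one ε

/-- The cutoff one-particle function `(h_x)_L(k) = h(k)·e^{i⟨k,x⟩}·χ_{I_L}(k)`. -/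
noncomputable def hxL (h : EuclideanSpace ℝ (Fin 3) → ℂ) (L : ℝ)
    (x : EuclideanSpace ℝ (Fin 3)) : EuclideanSpace ℝ (Fin 3) → ℂ :=
  (cubeI L).indicator fun k => h k * Complex.exp (Complex.I * (⟪k, x⟫ : ℝ))

/-- The lattice approximation
`(h_x)_{L,V}(k) = h(q_V(k))·e^{i⟨q_V(k),x⟩}·χ_{I_L}(k)`. -/
noncomputable def hxLV (h : EuclideanSpace ℝ (Fin 3) → ℂ) (L V : ℝ)
    (x : EuclideanSpace ℝ (Fin 3)) : EuclideanSpace ℝ (Fin 3) → ℂ :=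
  (cubeI L).indicator fun k =>
    h (qV V k) * Complex.exp (Complex.I * (⟪qV V k, x⟫ : ℝ))

/-- Let `h : ℝ³ → ℂ` be continuous, `L > 0`, and `χ_I : ℝ³ → ℂ` measurable with
`∫ (1 + ‖x‖)·|χ_I(x)| dx < ∞`.  Then
`lim_{V→∞} ∫ |χ_I(x)|·‖(h_x)_L − (h_x)_{L,V}‖₂ dx = 0`. -/
theorem tendsto_integral_chi_mul_eLpNorm_hxL_sub_hxLV
    (h : EuclideanSpace ℝ (Fin 3) → ℂ) (hh : Continuous h) (L : ℝ) (hL : 0 < L)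
    (χI : EuclideanSpace ℝ (Fin 3) → ℂ) (hχm : Measurable χI)
    (hχ : Integrable (fun x => (1 + ‖x‖) * ‖χI x‖) volume) :
    Filter.Tendsto
      (fun V : ℝ => ∫ x, ‖χI x‖ *
        (eLpNorm (hxL h L x - hxLV h L V x) 2 volume).toReal)
      Filter.atTop (nhds 0) := by
  classical
  have hcubeM : MeasurableSet (cubeI L) := cube_measurable L
  have hμ : volume (cubeI L) ≠ ⊤ := (cube_compact hL).measure_lt_top.ne
  set W : ℝ := (volume (cubeI L) ^ (1 / (2 : ℝ))).toReal with hWdef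
  have hW0 : 0 ≤ W := ENNReal.toReal_nonneg
  set A : ℝ := ∫ x, (1 + ‖x‖) * ‖χI x‖ with hAdef
  have hA0 : 0 ≤ A := integral_nonneg fun x => by positivity
  set K : Set (EuclideanSpace ℝ (Fin 3)) := Metric.closedBall 0 (2 * L + 8) with hKdef
  have hKc : IsCompact K := isCompact_closedBall _ _
  obtain ⟨M, hM⟩ := hKc.exists_bound_of_continuousOn hh.continuousOn
  have h0K : (0 : EuclideanSpace ℝ (Fin 3)) ∈ K := by
    simp only [hKdef, Metric.mem_closedBall, dist_self]
    positivity
  have hM0 : 0 ≤ M := le_trans (norm_nonneg _) (hM 0 h0K)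
  rw [Metric.tendsto_nhds]
  intro ε hε
  set ε₀ : ℝ := ε / (2 * W * A + 1) with hε₀def
  have hε₀ : 0 < ε₀ := div_pos hε (by positivity)
  obtain ⟨δ, hδ0, hδ⟩ := Metric.uniformContinuousOn_iff.mp
    (hKc.uniformContinuousOn_of_continuous hh.continuousOn) ε₀ hε₀
  refine Filter.eventually_atTop.mpr
    ⟨max 1 (max (8 / δ + 1) (16 * M / ε₀ + 1)), fun V hV => ?_⟩
  have hV1 : 1 ≤ V := le_trans (le_max_left _ _) hV
  have hV0 : 0 < V := lt_of_lt_of_le one_pos hV1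
  have hVδ : 8 / V < δ := by
    have h1 : 8 / δ + 1 ≤ V :=
      le_trans (le_trans (le_max_left _ _) (le_max_right _ _)) hV
    rw [div_lt_iff₀ hV0]
    have h2 := mul_le_mul_of_nonneg_left h1 hδ0.le
    have h3 : δ * (8 / δ + 1) = 8 + δ := by field_simp
    nlinarith
  have hVM : 16 * M / V ≤ ε₀ := by
    have h1 : 16 * M / ε₀ + 1 ≤ V :=
      le_trans (le_trans (le_max_right _ _) (le_max_right _ _)) hV
    rw [div_le_iff₀ hV0]
    have h2 := mul_le_mul_of_nonneg_left h1 hε₀.le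
    have h3 : ε₀ * (16 * M / ε₀ + 1) = 16 * M + ε₀ := by field_simp
    nlinarith
  -- key pointwise-in-x bound
  have key : ∀ x : EuclideanSpace ℝ (Fin 3),
      ‖χI x‖ * (eLpNorm (hxL h L x - hxLV h L V x) 2 volume).toReal
      ≤ (2 * ε₀ * W) * ((1 + ‖x‖) * ‖χI x‖) := by
    intro x
    set C : ℝ := ε₀ + (16 * M / V) * ‖x‖ with hCdef
    have hC0 : 0 ≤ C := by positivity
    have hpt : ∀ k, ‖(hxL h L x - hxLV h L V x) k‖ ≤ ‖(cubeI L).indicator (fun _ => C) k‖ := by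
      intro k
      by_cases hk : k ∈ cubeI L
      · have hd : (hxL h L x - hxLV h L V x) k
            = h k * Complex.exp (Complex.I * (⟪k, x⟫ : ℝ))
              - h (qV V k) * Complex.exp (Complex.I * (⟪qV V k, x⟫ : ℝ)) := by
          simp [hxL, hxLV, Set.indicator_of_mem hk]
        rw [hd, Set.indicator_of_mem hk, Real.norm_eq_abs, abs_of_nonneg hC0]
        have hknorm : ‖k‖ ≤ 2 * L :=
          euclid_norm_le hL.le fun j => abs_le.mpr ⟨(hk j).1, (hk j).2⟩
        have hkK : k ∈ K := by
          simp only [hKdef, Metric.mem_closedBall, dist_zero_right]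
          linarith
        have hq : dist (qV V k) k ≤ 8 / V := dist_qV hV0 k
        have hqK : qV V k ∈ K := by
          simp only [hKdef, Metric.mem_closedBall, dist_zero_right]
          have h1 : ‖qV V k‖ ≤ dist (qV V k) k + ‖k‖ := by
            rw [dist_eq_norm]
            have := norm_add_le (qV V k - k) k
            simpa using this
          have h2 : 8 / V ≤ 8 := by
            rw [div_le_iff₀ hV0]; nlinarith
          linarith
        have hhd : ‖h k - h (qV V k)‖ < ε₀ := by
          have := hδ k hkK (qV V k) hqK (lt_of_le_of_lt (by rw [dist_comm]; exact hq) hVδ)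
          rwa [dist_eq_norm] at this
        have hexp : ‖Complex.exp (Complex.I * (⟪k, x⟫ : ℝ))
            - Complex.exp (Complex.I * (⟪qV V k, x⟫ : ℝ))‖ ≤ (16 / V) * ‖x‖ := by
          refine le_trans (exp_I_sub_le _ _) ?_
          have hinner : (⟪k, x⟫ : ℝ) - (⟪qV V k, x⟫ : ℝ) = ⟪k - qV V k, x⟫ :=
            (inner_sub_left _ _ _).symm
          rw [hinner]
          have h2 : |(⟪k - qV V k, x⟫ : ℝ)| ≤ ‖k - qV V k‖ * ‖x‖ := abs_real_inner_le_norm _ _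
          have h3 : ‖k - qV V k‖ ≤ 8 / V := by
            rw [← dist_eq_norm, dist_comm]; exact hq
          have h4 : ‖k - qV V k‖ * ‖x‖ ≤ (8 / V) * ‖x‖ :=
            mul_le_mul_of_nonneg_right h3 (norm_nonneg _)
          calc 2 * |(⟪k - qV V k, x⟫ : ℝ)| ≤ 2 * ((8 / V) * ‖x‖) := by linarith
            _ = (16 / V) * ‖x‖ := by ring
        have hsplit : h k * Complex.exp (Complex.I * (⟪k, x⟫ : ℝ))
            - h (qV V k) * Complex.exp (Complex.I * (⟪qV V k, x⟫ : ℝ))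
            = (h k - h (qV V k)) * Complex.exp (Complex.I * (⟪k, x⟫ : ℝ))
              + h (qV V k) * (Complex.exp (Complex.I * (⟪k, x⟫ : ℝ))
                - Complex.exp (Complex.I * (⟪qV V k, x⟫ : ℝ))) := by ring
        rw [hsplit]
        have hMq : ‖h (qV V k)‖ ≤ M := by
          exact hM _ hqK
        calc ‖_‖ ≤ ‖(h k - h (qV V k)) * Complex.exp (Complex.I * (⟪k, x⟫ : ℝ))‖
              + ‖h (qV V k) * (Complex.exp (Complex.I * (⟪k, x⟫ : ℝ))
                - Complex.exp (Complex.I * (⟪qV V k, x⟫ : ℝ)))‖ := norm_add_le _ _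
          _ = ‖h k - h (qV V k)‖ * 1
              + ‖h (qV V k)‖ * ‖Complex.exp (Complex.I * (⟪k, x⟫ : ℝ))
                - Complex.exp (Complex.I * (⟪qV V k, x⟫ : ℝ))‖ := by
              rw [norm_mul, norm_mul, abs_exp_I_real]
          _ ≤ ε₀ * 1 + M * ((16 / V) * ‖x‖) := by
              have hnn : (0:ℝ) ≤ ‖Complex.exp (Complex.I * (⟪k, x⟫ : ℝ))
                - Complex.exp (Complex.I * (⟪qV V k, x⟫ : ℝ))‖ := norm_nonneg _
              have := mul_le_mul hMq hexp hnn hM0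
              nlinarith [hhd.le]
          _ = C := by rw [hCdef]; ring
      · have hd : (hxL h L x - hxLV h L V x) k = 0 := by
          simp [hxL, hxLV, Set.indicator_of_notMem hk]
        rw [hd, Set.indicator_of_notMem hk]
        simp
    have hle := eLpNorm_mono (p := (2 : ENNReal)) (μ := volume) hpt
    rw [eLpNorm_indicator_const hcubeM (by norm_num) (by norm_num)] at hle
    have hexp2 : (1 : ℝ) / (2 : ENNReal).toReal = 1 / 2 := by norm_num
    rw [hexp2] at hle
    have hrhs_fin : (‖C‖₊ : ENNReal) * volume (cubeI L) ^ ((1 : ℝ) / 2) ≠ ⊤ :=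
      ENNReal.mul_ne_top ENNReal.coe_ne_top
        (ENNReal.rpow_ne_top_of_nonneg (by norm_num) hμ)
    have htr := ENNReal.toReal_mono hrhs_fin hle
    rw [ENNReal.toReal_mul, ENNReal.coe_toReal, coe_nnnorm, Real.norm_eq_abs,
      abs_of_nonneg hC0] at htr
    have htr' : (eLpNorm (hxL h L x - hxLV h L V x) 2 volume).toReal ≤ C * W := htr
    have hCb : C * W ≤ (2 * ε₀ * W) * (1 + ‖x‖) := by
      have hx0 : (0:ℝ) ≤ ‖x‖ := norm_nonneg _
      have h1 : (16 * M / V) * ‖x‖ ≤ ε₀ * ‖x‖ := mul_le_mul_of_nonneg_right hVM hx0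
      have h2 : C ≤ 2 * ε₀ * (1 + ‖x‖) := by rw [hCdef]; nlinarith
      nlinarith
    calc ‖χI x‖ * (eLpNorm (hxL h L x - hxLV h L V x) 2 volume).toReal
        ≤ ‖χI x‖ * ((2 * ε₀ * W) * (1 + ‖x‖)) := by
          apply mul_le_mul_of_nonneg_left (le_trans htr' hCb) (norm_nonneg _)
      _ = (2 * ε₀ * W) * ((1 + ‖x‖) * ‖χI x‖) := by ring
  have h0 : 0 ≤ ∫ x, ‖χI x‖ * (eLpNorm (hxL h L x - hxLV h L V x) 2 volume).toReal :=
    integral_nonneg fun x => mul_nonneg (norm_nonneg _) ENNReal.toReal_nonneg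
  rw [Real.dist_eq, sub_zero, abs_of_nonneg h0]
  calc (∫ x, ‖χI x‖ * (eLpNorm (hxL h L x - hxLV h L V x) 2 volume).toReal)
      ≤ ∫ x, (2 * ε₀ * W) * ((1 + ‖x‖) * ‖χI x‖) := by
        apply integral_mono_of_nonneg
        · exact Filter.Eventually.of_forall fun x =>
            mul_nonneg (norm_nonneg _) ENNReal.toReal_nonneg
        · exact hχ.const_mul _
        · exact Filter.Eventually.of_forall key
    _ = (2 * ε₀ * W) * A := by rw [integral_const_mul]
    _ < ε := by rw [hε₀def]; exact twoEps_lt hε hW0 hA0
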